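/- Let I be a Borel-fixed monomial ideal in R = k[x_1,...,x_n] and s, t ≥ 1 integers such that dim_k (R/I)_t < C(s+t, t). Then every monomial of degree t in the variables x_1,...,x_{n-s} belongs to I; consequently the ideal (I, x_{n-s+1},...,x_n) contains all monomials of degree t, i.e., x_{n-s+1},...,x_n generate a reduction of R/I with reduction number at most t−1. -/

import Mathlib

open MvPolynomial

noncomputable section

/-- The total degree of a monomial exponent vector. -/
def monDeg {n : ℕ} (A : Fin n →₀ ℕ) : ℕ := A.sum fun _ e => e

/-- `BorelSpec A B` : the monomial `x^B` is a Borel specialization of `x^A`,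
i.e. `x^B` is obtained from `x^A` by replacing every variable `x_i` of `x^A`
by a variable `x_{f i}` with `f i ≤ i`. -/
def BorelSpec {n : ℕ} (A B : Fin n →₀ ℕ) : Prop :=
  ∃ f : Fin n → Fin n, (∀ i, f i ≤ i) ∧ B = A.mapDomain f

/-- `borelPSet A` : the set of (exponent vectors of) monomials that can be
Borel-specialized to `x^A`. -/
def borelPSet {n : ℕ} (A : Fin n →₀ ℕ) : Set (Fin n →₀ ℕ) := {C | BorelSpec C A}

/-- A monomial ideal: an ideal generated by monomials. -/
def IsMonomialIdeal {k : Type*} [Field k] {n : ℕ} (I : Ideal (MvPolynomial (Fin n) k)) : Prop :=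
  ∃ S : Set (Fin n →₀ ℕ), I = Ideal.span ((fun A => (monomial A (1 : k))) '' S)

/-- Borel-fixed: `I` is fixed by every invertible linear substitution sending each
variable `x_i` to a linear combination of the variables `x_j` with `j ≤ i`
(the Borel group of upper triangular invertible matrices). -/
def IsBorelFixed {k : Type*} [Field k] {n : ℕ} (I : Ideal (MvPolynomial (Fin n) k)) : Prop :=
  ∀ g : Matrix (Fin n) (Fin n) k, IsUnit g.det → (∀ i j : Fin n, i < j → g i j = 0) →
    I.map (aeval (fun i => ∑ j, MvPolynomial.C (g i j) * X j) :
      MvPolynomial (Fin n) k →ₐ[k] MvPolynomial (Fin n) k) = I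

/-- The Hilbert function `t ↦ dim_k (R/I)_t`. -/
def hilb {k : Type*} [Field k] {n : ℕ} (I : Ideal (MvPolynomial (Fin n) k)) (t : ℕ) : ℕ :=
  Module.finrank k
    ((homogeneousSubmodule (Fin n) k t).map (Ideal.Quotient.mkₐ k I).toLinearMap)

/-- `Q` generates a reduction of `R/I` : `(Q + I)_t = R_t` for all large `t`. -/
def IsReductionOf {k : Type*} [Field k] {n : ℕ} (Q I : Ideal (MvPolynomial (Fin n) k)) : Prop :=
  ∃ N : ℕ, ∀ t ≥ N, ∀ p : MvPolynomial (Fin n) k, p.IsHomogeneous t → p ∈ Q ⊔ I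

/-- The reduction number `r_Q(R/I)` : the least `r` such that
`(Q + I)_t = R_t` for all `t > r`. -/
def redNum {k : Type*} [Field k] {n : ℕ} (Q I : Ideal (MvPolynomial (Fin n) k)) : ℕ :=
  sInf {r : ℕ | ∀ t > r, ∀ p : MvPolynomial (Fin n) k, p.IsHomogeneous t → p ∈ Q ⊔ I}

/-- `Q` is an `s`-reduction of `R/I` : it is generated by `s` linear forms and is a
reduction of `R/I`. -/
def IsSReduction {k : Type*} [Field k] {n : ℕ} (s : ℕ)
    (Q I : Ideal (MvPolynomial (Fin n) k)) : Prop :=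
  (∃ z : Fin s → MvPolynomial (Fin n) k,
      (∀ i, (z i).IsHomogeneous 1) ∧ Q = Ideal.span (Set.range z)) ∧
  IsReductionOf Q I

/-- The `s`-reduction number `r_s(R/I)` : the minimum of `r_Q(R/I)` over all
`s`-reductions `Q` of `R/I`. -/
def sRedNum {k : Type*} [Field k] {n : ℕ} (s : ℕ) (I : Ideal (MvPolynomial (Fin n) k)) : ℕ :=
  sInf {r : ℕ | ∃ Q, IsSReduction s Q I ∧ redNum Q I = r}

/-- Strong stability condition on a monomial ideal: if `x^A ∈ I` is divisible by `x_i`,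
then `x^A x_j / x_i ∈ I` for all `j ≤ i`. -/
def StronglyStable {k : Type*} [Field k] {n : ℕ} (I : Ideal (MvPolynomial (Fin n) k)) : Prop :=
  ∀ (A : Fin n →₀ ℕ) (i j : Fin n), monomial A (1 : k) ∈ I → A i ≠ 0 → j ≤ i →
    monomial (A - Finsupp.single i 1 + Finsupp.single j 1) (1 : k) ∈ I

/-- Lex-segment condition: if `x^A ∈ I` and `x^B ≥ x^A` in the lexicographic order
(with `x_1 > x_2 > ⋯ > x_n`) and `deg x^B = deg x^A`, then `x^B ∈ I`. -/
def IsLexSegment {k : Type*} [Field k] {n : ℕ} (I : Ideal (MvPolynomial (Fin n) k)) : Prop :=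
  ∀ A B : Fin n →₀ ℕ, monomial A (1 : k) ∈ I → monDeg B = monDeg A →
    Finsupp.Lex (· < ·) (· < ·) A B → monomial B (1 : k) ∈ I

/-- A homogeneous ideal: closed under taking homogeneous components. -/
def IsHomogeneousIdeal {k : Type*} [Field k] {n : ℕ} (I : Ideal (MvPolynomial (Fin n) k)) : Prop :=
  ∀ p ∈ I, ∀ t : ℕ, homogeneousComponent t p ∈ I

/-- The ideal generated by the last `s` variables `x_{n-s+1}, …, x_n`. -/
def lastVars (k : Type*) [Field k] (n s : ℕ) : Ideal (MvPolynomial (Fin n) k) :=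
  Ideal.span ((fun i => (X i : MvPolynomial (Fin n) k)) '' {i : Fin n | n - s ≤ (i : ℕ)})




section StmtFourHelpers

variable {k : Type*} [Field k] {n : ℕ}

lemma monDeg_eq_degree {n : ℕ} (A : Fin n →₀ ℕ) : monDeg A = A.degree := by
  simp [monDeg, Finsupp.degree, Finsupp.sum]
  rfl

lemma monDeg_add {n : ℕ} (A B : Fin n →₀ ℕ) : monDeg (A + B) = monDeg A + monDeg B := by
  simp [monDeg, Finsupp.sum_add_index']

lemma monDeg_single {n : ℕ} (i : Fin n) (c : ℕ) : monDeg (Finsupp.single i c) = c := by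
  simp [monDeg, Finsupp.sum_single_index]

lemma mem_of_coeff {k : Type*} [Field k] {n : ℕ} {I : Ideal (MvPolynomial (Fin n) k)}
    (hmon : IsMonomialIdeal I) {p : MvPolynomial (Fin n) k} (hp : p ∈ I)
    {D : Fin n →₀ ℕ} (h : coeff D p ≠ 0) : monomial D (1 : k) ∈ I := by
  obtain ⟨S, rfl⟩ := hmon
  rw [Ideal.span, Submodule.mem_span_set] at hp
  obtain ⟨c, hsupp, rfl⟩ := hp
  rw [Finsupp.sum] at h
  have h2 : ∃ m ∈ c.support, coeff D (c m • m) ≠ 0 := by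
    by_contra hc
    push_neg at hc
    apply h
    rw [MvPolynomial.coeff_sum]
    exact Finset.sum_eq_zero hc
  obtain ⟨m, hm, hne⟩ := h2
  obtain ⟨B, _hB, rfl⟩ := hsupp hm
  rw [smul_eq_mul, coeff_mul_monomial'] at hne
  split_ifs at hne with hle
  · have : monomial D (1:k) = monomial (D - B) 1 * monomial B 1 := by
      rw [monomial_mul, one_mul, tsub_add_cancel_of_le hle]
    rw [this]
    exact Ideal.mul_mem_left _ _ (Ideal.subset_span ⟨B, _hB, rfl⟩)
  · exact absurd rfl hne

def wgt {n : ℕ} (D : Fin n →₀ ℕ) : ℕ := D.sum fun i e => e * (i : ℕ)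

lemma wgt_add (A B : Fin n →₀ ℕ) : wgt (A + B) = wgt A + wgt B := by
  simp [wgt, Finsupp.sum_add_index', add_mul]

lemma wgt_single (i : Fin n) (c : ℕ) : wgt (Finsupp.single i c) = c * i := by
  simp [wgt, Finsupp.sum_single_index]

/-- the linear forms used in the Borel substitution -/
def bl (f : Fin n → Fin n) (i : Fin n) : MvPolynomial (Fin n) k :=
  X i + (if f i = i then 0 else X (f i))

/-- key per-factor lemma -/
lemma bl_pow_coeff {f : Fin n → Fin n} (hf : ∀ i, f i ≤ i) (i : Fin n) (c : ℕ) :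
    (∀ D : Fin n →₀ ℕ, coeff D ((bl f i : MvPolynomial (Fin n) k) ^ c) ≠ 0 →
      c * (f i : ℕ) ≤ wgt D ∧ (wgt D = c * (f i : ℕ) → D = Finsupp.single (f i) c)) ∧
    coeff (Finsupp.single (f i) c) ((bl f i : MvPolynomial (Fin n) k) ^ c) = 1 := by
  by_cases hfi : f i = i
  · rw [bl, if_pos hfi, add_zero, hfi]
    constructor
    · intro D hD
      rw [X_pow_eq_monomial, coeff_monomial] at hD
      split_ifs at hD with he
      · subst he; simp [wgt_single]
      · exact absurd rfl hD
    · rw [X_pow_eq_monomial, coeff_monomial, if_pos rfl]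
  · have hlt : (f i : ℕ) < i := lt_of_le_of_ne (hf i) (fun h => hfi (Fin.ext h))
    have hne : f i ≠ i := hfi
    rw [bl, if_neg hfi]
    have hexp : (X i + X (f i) : MvPolynomial (Fin n) k) ^ c =
        ∑ b ∈ Finset.range (c + 1),
          monomial (Finsupp.single i b + Finsupp.single (f i) (c - b)) ((c.choose b : k)) := by
      rw [Commute.add_pow (Commute.all _ _)]
      apply Finset.sum_congr rfl
      intro b _
      rw [X_pow_eq_monomial, X_pow_eq_monomial, monomial_mul, one_mul,
        show ((c.choose b : ℕ) : MvPolynomial (Fin n) k) = MvPolynomial.C ((c.choose b : k)) from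
          (map_natCast MvPolynomial.C _).symm,
        mul_comm, C_mul_monomial, mul_one]
    have happly : ∀ b, Finsupp.single i b + Finsupp.single (f i) (c - b) =
        Finsupp.single (f i) c → b = 0 := by
      intro b hb
      have := DFunLike.congr_fun hb i
      simpa [Finsupp.single_apply, hne, (Ne.symm hne)] using this
    constructor
    · intro D hD
      rw [hexp, coeff_sum] at hD
      obtain ⟨b, hbmem, hbne⟩ := Finset.exists_ne_zero_of_sum_ne_zero hD
      rw [coeff_monomial] at hbne
      have hDeq : Finsupp.single i b + Finsupp.single (f i) (c - b) = D := by
        by_contra hc; rw [if_neg hc] at hbne; exact hbne rfl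
      have hb : b ≤ c := Nat.lt_succ_iff.mp (Finset.mem_range.mp hbmem)
      subst hDeq
      rw [wgt_add, wgt_single, wgt_single]
      have hkey : c * (f i : ℕ) + b ≤ b * (i : ℕ) + (c - b) * ((f i : ℕ)) := by
        have h1 : b * ((f i : ℕ) + 1) ≤ b * (i : ℕ) := Nat.mul_le_mul_left b hlt
        have h2 : b * (f i : ℕ) + (c - b) * (f i : ℕ) = c * (f i : ℕ) := by
          rw [← add_mul, Nat.add_sub_cancel' hb]
        have h3 : b * ((f i : ℕ) + 1) = b * (f i : ℕ) + b := by ring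
        omega
      constructor
      · omega
      · intro hw
        have hb0 : b = 0 := by omega
        subst hb0
        simp
    · rw [hexp, coeff_sum]
      rw [Finset.sum_eq_single_of_mem 0 (Finset.mem_range.mpr (Nat.succ_pos c))]
      · simp
      · intro b _ hb0
        rw [coeff_monomial, if_neg]
        intro hcon
        exact hb0 (happly b hcon)

lemma bl_prod_coeff {f : Fin n → Fin n} (hf : ∀ i, f i ≤ i) (S : Finset (Fin n)) (c : Fin n → ℕ) :
    (∀ D : Fin n →₀ ℕ, coeff D (∏ i ∈ S, (bl f i : MvPolynomial (Fin n) k) ^ c i) ≠ 0 →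
      wgt (∑ i ∈ S, Finsupp.single (f i) (c i)) ≤ wgt D ∧
      (wgt D = wgt (∑ i ∈ S, Finsupp.single (f i) (c i)) →
        D = ∑ i ∈ S, Finsupp.single (f i) (c i))) ∧
    coeff (∑ i ∈ S, Finsupp.single (f i) (c i))
      (∏ i ∈ S, (bl f i : MvPolynomial (Fin n) k) ^ c i) = 1 := by
  classical
  induction S using Finset.induction_on with
  | empty =>
      constructor
      · intro D hD
        rw [Finset.prod_empty] at hD
        rw [MvPolynomial.coeff_one] at hD
        split_ifs at hD with h0
        · subst h0; simp
        · exact absurd rfl hD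
      · simp [MvPolynomial.coeff_one]
  | insert a S' hnotmem ih =>
      obtain ⟨ih1, ih2⟩ := ih
      rw [Finset.prod_insert hnotmem, Finset.sum_insert hnotmem]
      obtain ⟨f1, f2⟩ := bl_pow_coeff (k := k) hf a (c a)
      set T' := ∑ i ∈ S', Finsupp.single (f i) (c i) with hT'
      set q := ∏ i ∈ S', (bl f i : MvPolynomial (Fin n) k) ^ c i with hq
      have hwT : wgt (Finsupp.single (f a) (c a) + T') = c a * (f a : ℕ) + wgt T' := by
        rw [wgt_add, wgt_single]
      constructor
      · intro D hD
        rw [MvPolynomial.coeff_mul] at hD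
        obtain ⟨⟨u, v⟩, hmem, hne⟩ := Finset.exists_ne_zero_of_sum_ne_zero hD
        have huv : u + v = D := Finset.HasAntidiagonal.mem_antidiagonal.mp hmem
        have hu : coeff u ((bl f a : MvPolynomial (Fin n) k) ^ c a) ≠ 0 := by
          intro h; rw [h, zero_mul] at hne; exact hne rfl
        have hv : coeff v q ≠ 0 := by
          intro h; rw [h, mul_zero] at hne; exact hne rfl
        obtain ⟨hu1, hu2⟩ := f1 u hu
        obtain ⟨hv1, hv2⟩ := ih1 v hv
        subst huv
        rw [wgt_add, wgt_add, wgt_single]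
        constructor
        · omega
        · intro heq
          have e1 : wgt u = c a * (f a : ℕ) := by omega
          have e2 : wgt v = wgt T' := by omega
          rw [hu2 e1, hv2 e2]
      · rw [MvPolynomial.coeff_mul]
        rw [Finset.sum_eq_single_of_mem (Finsupp.single (f a) (c a), T')]
        · rw [f2, ih2, one_mul]
        · rw [Finset.HasAntidiagonal.mem_antidiagonal]
        · rintro ⟨u, v⟩ hmem hnepair
          have huv : u + v = Finsupp.single (f a) (c a) + T' := Finset.HasAntidiagonal.mem_antidiagonal.mp hmem
          by_contra hne0
          have hu : coeff u ((bl f a : MvPolynomial (Fin n) k) ^ c a) ≠ 0 := by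
            intro h; rw [h, zero_mul] at hne0; exact hne0 rfl
          have hv : coeff v q ≠ 0 := by
            intro h; rw [h, mul_zero] at hne0; exact hne0 rfl
          obtain ⟨hu1, hu2⟩ := f1 u hu
          obtain ⟨hv1, hv2⟩ := ih1 v hv
          have hw : wgt u + wgt v = c a * (f a : ℕ) + wgt T' := by
            rw [← wgt_add, huv, hwT]
          have e1 : wgt u = c a * (f a : ℕ) := by omega
          have e2 : wgt v = wgt T' := by omega
          exact hnepair (Prod.ext (hu2 e1) (hv2 e2))

/-- the Borel matrix associated to a specialization map f -/
def bmat (k : Type*) [Field k] {n : ℕ} (f : Fin n → Fin n) : Matrix (Fin n) (Fin n) k :=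
  Matrix.of fun i j => (if j = i then (1:k) else 0) + (if j = f i ∧ ¬ j = i then 1 else 0)

lemma bmat_tri {f : Fin n → Fin n} (hf : ∀ i, f i ≤ i) :
    ∀ i j : Fin n, i < j → bmat k f i j = 0 := by
  intro i j hij
  have h1 : j ≠ i := ne_of_gt hij
  have h2 : ¬(j = f i ∧ ¬ j = i) := by
    rintro ⟨rfl, -⟩
    exact absurd (lt_of_le_of_lt (hf i) hij) (lt_irrefl _)
  rw [bmat]
  simp only [Matrix.of_apply, if_neg h1, if_neg h2, add_zero]

lemma bmat_det {f : Fin n → Fin n} (hf : ∀ i, f i ≤ i) : (bmat k f).det = 1 := by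
  have htri : (bmat k f).BlockTriangular ⇑OrderDual.toDual := by
    intro i j hij
    exact bmat_tri hf i j hij
  rw [Matrix.det_of_lowerTriangular _ htri]
  apply Finset.prod_eq_one
  intro i _
  have h2 : ¬(i = f i ∧ ¬ i = i) := by rintro ⟨-, h⟩; exact h rfl
  simp [bmat, if_neg h2]

lemma bmat_row (f : Fin n → Fin n) (i : Fin n) :
    (∑ j, MvPolynomial.C (bmat k f i j) * X j) = (bl f i : MvPolynomial (Fin n) k) := by
  have : ∀ j, MvPolynomial.C (bmat k f i j) * (X j : MvPolynomial (Fin n) k) =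
      (if j = i then X j else 0) + (if j = f i then (if f i = i then 0 else X j) else 0) := by
    intro j
    rw [bmat]
    simp only [Matrix.of_apply, map_add, add_mul]
    congr 1
    · split_ifs <;> simp
    · by_cases h1 : j = f i
      · by_cases h2 : j = i
        · have h3 : f i = i := h1.symm.trans h2
          simp [h1, h2, h3]
        · have h3 : ¬ f i = i := fun h => h2 (h1.trans h)
          simp [h1, h2, h3]
      · simp [h1]
  rw [Finset.sum_congr rfl (fun j _ => this j), Finset.sum_add_distrib,
    Finset.sum_ite_eq' Finset.univ i (fun j => (X j : MvPolynomial (Fin n) k)),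
    Finset.sum_ite_eq' Finset.univ (f i) (fun j => if f i = i then 0 else (X j : MvPolynomial (Fin n) k))]
  simp [bl]

lemma descent {I : Ideal (MvPolynomial (Fin n) k)} (hmon : IsMonomialIdeal I)
    (hborel : IsBorelFixed I) {C : Fin n →₀ ℕ} {f : Fin n → Fin n} (hf : ∀ i, f i ≤ i)
    (hC : monomial C (1:k) ∈ I) : monomial (Finsupp.mapDomain f C) (1:k) ∈ I := by
  have hmap := hborel (bmat k f) (by rw [bmat_det hf]; exact isUnit_one) (bmat_tri hf)
  set φ := (aeval (fun i => ∑ j, MvPolynomial.C (bmat k f i j) * X j) :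
      MvPolynomial (Fin n) k →ₐ[k] MvPolynomial (Fin n) k) with hφ
  have hP : φ (monomial C (1:k)) ∈ I := by
    rw [← hmap]; exact Ideal.mem_map_of_mem φ hC
  have hPeq : φ (monomial C (1:k)) = ∏ i ∈ C.support, (bl f i : MvPolynomial (Fin n) k) ^ C i := by
    rw [hφ, aeval_monomial, map_one, one_mul, Finsupp.prod]
    exact Finset.prod_congr rfl (fun i _ => by rw [bmat_row])
  have hT : Finsupp.mapDomain f C = ∑ i ∈ C.support, Finsupp.single (f i) (C i) := rfl
  have hco : coeff (Finsupp.mapDomain f C) (φ (monomial C (1:k))) = 1 := by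
    rw [hPeq, hT]
    exact (bl_prod_coeff hf C.support C).2
  apply mem_of_coeff hmon hP
  rw [hco]
  exact one_ne_zero

lemma toFinsupp_map {α β : Type*} [DecidableEq α] [DecidableEq β] (g : α → β) (m : Multiset α) :
    (m.map g).toFinsupp = Finsupp.mapDomain g m.toFinsupp := by
  induction m using Multiset.induction_on with
  | empty => simp
  | cons a s ih =>
      rw [Multiset.map_cons, ← Multiset.singleton_add, ← Multiset.singleton_add,
        Multiset.toFinsupp_add, Multiset.toFinsupp_add, Finsupp.mapDomain_add, ih,
        Multiset.toFinsupp_singleton, Multiset.toFinsupp_singleton, Finsupp.mapDomain_single]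

lemma toFinsupp_sum_eq (m : Multiset ℕ) :
    (m.toFinsupp).sum (fun _ e => e) = Multiset.card m := by
  induction m using Multiset.induction_on with
  | empty => simp
  | cons a s ih =>
      rw [← Multiset.singleton_add, Multiset.toFinsupp_add, Finsupp.sum_add_index'
        (fun _ => rfl) (fun _ _ _ => rfl), Multiset.toFinsupp_singleton, ih]
      simp [Finsupp.sum_single_index]
      omega

lemma sorted_getElem_le {l : List ℕ} (hl : l.Pairwise (· ≤ ·)) {i j : ℕ} (hij : i ≤ j)
    (hj : j < l.length) : l[i]'(lt_of_le_of_lt hij hj) ≤ l[j] := by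
  rcases Nat.lt_or_ge i j with h | h
  · exact List.pairwise_iff_get.mp hl ⟨i, _⟩ ⟨j, _⟩ h
  · have : i = j := le_antisymm hij h
    subst this; rfl

lemma sorted_zipWith {p v : List ℕ} (hp : p.Pairwise (· ≤ ·)) (hv : v.Pairwise (· ≤ ·))
    (hl : p.length = v.length) : (List.zipWith (· + ·) p v).Pairwise (· ≤ ·) := by
  rw [List.pairwise_iff_get]
  intro i j hij
  simp only [List.get_eq_getElem, List.getElem_zipWith]
  have hlen : (List.zipWith (· + ·) p v).length = p.length := by
    rw [List.length_zipWith, hl, min_self]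
  have h1 : (j : ℕ) < p.length := by rw [← hlen]; exact j.isLt
  have h2 : (j : ℕ) < v.length := by rw [← hl]; exact h1
  exact Nat.add_le_add
    (sorted_getElem_le hp (le_of_lt hij) h1)
    (sorted_getElem_le hv (le_of_lt hij) h2)

/-- equal zip values have equal first components, for sorted lists -/
lemma zip_eq_of_eq {p v : List ℕ} (hp : p.Pairwise (· ≤ ·)) (hv : v.Pairwise (· ≤ ·))
    (hl : p.length = v.length) {i j : ℕ} (hi : i < (List.zipWith (· + ·) p v).length)
    (hj : j < (List.zipWith (· + ·) p v).length)
    (heq : (List.zipWith (· + ·) p v)[i] = (List.zipWith (· + ·) p v)[j]) :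
    p[i]'(by rw [List.length_zipWith, hl, min_self] at hi; omega) =
    p[j]'(by rw [List.length_zipWith, hl, min_self] at hj; omega) := by
  have hlen : (List.zipWith (· + ·) p v).length = p.length := by
    rw [List.length_zipWith, hl, min_self]
  have hip : i < p.length := by omega
  have hjp : j < p.length := by omega
  have hiv : i < v.length := by omega
  have hjv : j < v.length := by omega
  rw [List.getElem_zipWith, List.getElem_zipWith] at heq
  rcases le_or_gt i j with h | h
  · have e1 := sorted_getElem_le hp h hjp
    have e2 := sorted_getElem_le hv h hjv
    omega
  · have e1 := sorted_getElem_le hp (le_of_lt h) hip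
    have e2 := sorted_getElem_le hv (le_of_lt h) hiv
    omega

lemma construction {n s t : ℕ} (A : Fin n →₀ ℕ) (hdeg : monDeg A = t)
    (hsupp : ∀ i ∈ A.support, (i : ℕ) < n - s) :
    ∃ CF : Sym (Fin (s+1)) t → (Fin n →₀ ℕ),
      Function.Injective CF ∧
      ∀ M, monDeg (CF M) = t ∧
        ∃ f : Fin n → Fin n, (∀ i, f i ≤ i) ∧ Finsupp.mapDomain f (CF M) = A := by
  classical
  set PA : List ℕ := Multiset.sort (A.toMultiset.map Fin.val) (· ≤ ·) with hPA
  have hPAlen : PA.length = t := by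
    rw [hPA, Multiset.length_sort, Multiset.card_map, Finsupp.card_toMultiset, ← hdeg]
    rfl
  have hPAsorted : PA.Pairwise (· ≤ ·) := Multiset.pairwise_sort _ _
  have hPAmem : ∀ x ∈ PA, x < n - s := by
    intro x hx
    rw [hPA, Multiset.mem_sort, Multiset.mem_map] at hx
    obtain ⟨i, hi, rfl⟩ := hx
    exact hsupp i ((Finsupp.mem_toMultiset A i).mp hi)
  -- the lists associated to M
  set VL : Sym (Fin (s+1)) t → List ℕ :=
    fun M => Multiset.sort (M.1.map Fin.val) (· ≤ ·) with hVL
  have hVLlen : ∀ M, (VL M).length = t := by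
    intro M; rw [hVL, Multiset.length_sort, Multiset.card_map, M.2]
  have hVLsorted : ∀ M, (VL M).Pairwise (· ≤ ·) := fun M => Multiset.pairwise_sort _ _
  have hVLmem : ∀ M, ∀ x ∈ VL M, x ≤ s := by
    intro M x hx
    rw [hVL, Multiset.mem_sort, Multiset.mem_map] at hx
    obtain ⟨a, _, rfl⟩ := hx
    exact Nat.lt_succ_iff.mp a.isLt
  set QL : Sym (Fin (s+1)) t → List ℕ := fun M => List.zipWith (· + ·) PA (VL M) with hQL
  have hlenEq : ∀ M, PA.length = (VL M).length := fun M => by rw [hPAlen, hVLlen]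
  have hQLlen : ∀ M, (QL M).length = t := by
    intro M; rw [hQL, List.length_zipWith, hPAlen, hVLlen, min_self]
  have hQLsorted : ∀ M, (QL M).Pairwise (· ≤ ·) :=
    fun M => sorted_zipWith hPAsorted (hVLsorted M) (hlenEq M)
  have hQLmem : ∀ M, ∀ x ∈ QL M, x < n := by
    intro M x hx
    rw [List.mem_iff_getElem] at hx
    obtain ⟨j, hj, rfl⟩ := hx
    have hjq : j < t := by rw [← hQLlen M]; exact hj
    have hjp : j < PA.length := by rw [hPAlen]; omega
    have hjv : j < (VL M).length := by rw [hVLlen M]; omega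
    have e1 : (QL M)[j]'hj = PA[j]'hjp + (VL M)[j]'hjv := List.getElem_zipWith ..
    have h1 : PA[j]'hjp < n - s := hPAmem _ (List.getElem_mem _)
    have h2 : (VL M)[j]'hjv ≤ s := hVLmem M _ (List.getElem_mem _)
    omega
  set CN : Sym (Fin (s+1)) t → (ℕ →₀ ℕ) := fun M => (↑(QL M) : Multiset ℕ).toFinsupp with hCN
  set CF : Sym (Fin (s+1)) t → (Fin n →₀ ℕ) :=
    fun M => Finsupp.comapDomain Fin.val (CN M) (Fin.val_injective.injOn) with hCF
  have hmapval : ∀ M, Finsupp.mapDomain Fin.val (CF M) = CN M := by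
    intro M
    apply Finsupp.mapDomain_comapDomain _ Fin.val_injective
    intro x hx
    have hx' : x ∈ (QL M) := by
      have := Finset.mem_coe.mp hx
      rw [hCN] at this
      rw [Multiset.toFinsupp_support] at this
      simpa using Multiset.mem_toFinset.mp this
    exact ⟨⟨x, hQLmem M x hx'⟩, rfl⟩
  refine ⟨CF, ?_, ?_⟩
  · -- injectivity
    intro M1 M2 hMeq
    have hCNeq : CN M1 = CN M2 := by rw [← hmapval M1, ← hmapval M2, hMeq]
    have hQmult : (↑(QL M1) : Multiset ℕ) = ↑(QL M2) := by
      apply Multiset.toFinsupp.injective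
      exact hCNeq
    have hQeq : QL M1 = QL M2 :=
      List.Perm.eq_of_pairwise' (hQLsorted M1) (hQLsorted M2) (Multiset.coe_eq_coe.mp hQmult)
    have hVeq : VL M1 = VL M2 := by
      apply List.ext_getElem (by rw [hVLlen, hVLlen])
      intro j hj1 hj2
      have hjp : j < PA.length := by rw [hPAlen]; rw [hVLlen M1] at hj1; omega
      have hq1 : j < (QL M1).length := by rw [hQLlen]; rw [hVLlen M1] at hj1; omega
      have hq2 : j < (QL M2).length := by rw [hQLlen]; rw [hVLlen M1] at hj1; omega
      have e1 : (QL M1)[j]'hq1 = PA[j]'hjp + (VL M1)[j]'hj1 := List.getElem_zipWith ..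
      have e2 : (QL M2)[j]'hq2 = PA[j]'hjp + (VL M2)[j]'hj2 := List.getElem_zipWith ..
      have e3 : (QL M1)[j]'hq1 = (QL M2)[j]'hq2 := List.getElem_of_eq hQeq hq1
      omega
    have hmult2 : M1.1.map Fin.val = M2.1.map Fin.val := by
      have h1 : (↑(VL M1) : Multiset ℕ) = M1.1.map Fin.val := Multiset.sort_eq _ _
      have h2 : (↑(VL M2) : Multiset ℕ) = M2.1.map Fin.val := Multiset.sort_eq _ _
      rw [← h1, ← h2, hVeq]
    have : M1.1 = M2.1 := Multiset.map_injective Fin.val_injective hmult2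
    exact Subtype.ext this
  · -- degree and specialization
    intro M
    constructor
    · have h1 : (Finsupp.mapDomain Fin.val (CF M)).sum (fun _ e => e) = monDeg (CF M) := by
        rw [Finsupp.sum_mapDomain_index (fun _ => rfl) (fun _ _ _ => rfl)]
        rfl
      rw [hmapval M] at h1
      rw [← h1] at *
      rw [hCN] at *
      rw [toFinsupp_sum_eq]
      simpa using hQLlen M
    · -- build f
      set fN : ℕ → ℕ := fun x =>
        if h : x ∈ QL M then
          PA[List.idxOf x (QL M)]'(by
            rw [hPAlen, ← hQLlen M]; exact List.idxOf_lt_length_iff.mpr h)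
        else x with hfN
      have hfNlt : ∀ x : ℕ, x < n → fN x < n := by
        intro x hx
        simp only [hfN]
        split_ifs with h
        · exact lt_of_lt_of_le (hPAmem _ (List.getElem_mem _)) (Nat.sub_le n s)
        · exact hx
      have hfNle : ∀ x, x ∈ QL M → fN x ≤ x := by
        intro x h
        simp only [hfN]
        rw [dif_pos h]
        have hjlt : List.idxOf x (QL M) < (QL M).length := List.idxOf_lt_length_iff.mpr h
        have hjp : List.idxOf x (QL M) < PA.length := by rw [hPAlen, ← hQLlen M]; omega
        have hjv : List.idxOf x (QL M) < (VL M).length := by rw [hVLlen, ← hQLlen M]; omega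
        have hx2 : (QL M)[List.idxOf x (QL M)]'hjlt = x := List.getElem_idxOf hjlt
        have e1 : (QL M)[List.idxOf x (QL M)]'hjlt = PA[List.idxOf x (QL M)]'hjp
            + (VL M)[List.idxOf x (QL M)]'hjv := List.getElem_zipWith ..
        have hle2 : PA[List.idxOf x (QL M)]'hjp ≤ (QL M)[List.idxOf x (QL M)]'hjlt := by
          rw [e1]; exact Nat.le_add_right _ _
        rw [hx2] at hle2
        exact hle2
      set f : Fin n → Fin n := fun i => ⟨fN i.val, hfNlt i.val i.isLt⟩ with hf
      refine ⟨f, ?_, ?_⟩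
      · intro i
        simp only [hf, Fin.le_def]
        by_cases h : (i : ℕ) ∈ QL M
        · exact hfNle _ h
        · simp only [hfN]
          rw [dif_neg h]
      · -- mapDomain f (CF M) = A
        apply Finsupp.mapDomain_injective Fin.val_injective
        rw [← Finsupp.mapDomain_comp]
        have hcomp : Fin.val ∘ f = fN ∘ Fin.val := by funext i; rfl
        rw [hcomp, Finsupp.mapDomain_comp, hmapval M, hCN, ← toFinsupp_map]
        have hQmap : (QL M).map fN = PA := by
          apply List.ext_getElem
          · rw [List.length_map, hQLlen, hPAlen]
          · intro j hj1 hj2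
            rw [List.getElem_map]
            have hjq : j < (QL M).length := by rw [List.length_map] at hj1; omega
            have hmem : (QL M)[j]'hjq ∈ QL M := List.getElem_mem _
            simp only [hfN]
            rw [dif_pos hmem]
            set j0 := List.idxOf ((QL M)[j]'hjq) (QL M) with hj0
            have hj0lt : j0 < (QL M).length := List.idxOf_lt_length_iff.mpr hmem
            have hq00 : (QL M)[j0]'hj0lt = (QL M)[j]'hjq := List.getElem_idxOf hj0lt
            exact zip_eq_of_eq hPAsorted (hVLsorted M) (hlenEq M) hj0lt hjq hq00
        rw [Multiset.map_coe, hQmap, hPA, Multiset.sort_eq, toFinsupp_map,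
          Finsupp.toMultiset_toFinsupp]

lemma homSub_fg (k : Type*) [Field k] (n t : ℕ) :
    (homogeneousSubmodule (Fin n) k t).FG := by
  classical
  have hfin : ({d : Fin n →₀ ℕ | monDeg d = t}).Finite := by
    apply Set.Finite.subset (Set.finite_Iic (Finsupp.equivFunOnFinite.symm (fun _ => t)))
    intro d hd
    rw [Set.mem_Iic, Finsupp.le_def]
    intro i
    have h1 : d i ≤ monDeg d := by
      by_cases hi : i ∈ d.support
      · exact Finset.single_le_sum (fun j _ => Nat.zero_le _) hi
      · rw [Finsupp.notMem_support_iff.mp hi]; exact Nat.zero_le _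
    have h2 : (Finsupp.equivFunOnFinite.symm (fun _ => t)) i = t := rfl
    rw [h2]
    exact le_trans h1 (le_of_eq hd)
  have heq : homogeneousSubmodule (Fin n) k t =
      Submodule.span k ((fun d => monomial d (1:k)) '' {d | monDeg d = t}) := by
    apply le_antisymm
    · intro p hp
      rw [mem_homogeneousSubmodule] at hp
      rw [← support_sum_monomial_coeff p]
      apply Submodule.sum_mem
      intro d hd
      have hdeg : monDeg d = t := by
        by_contra hne
        exact (mem_support_iff.mp hd)
          (hp.coeff_eq_zero (by rw [← monDeg_eq_degree]; exact hne))
      have : monomial d (coeff d p) = (coeff d p) • monomial d (1:k) := by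
        rw [smul_monomial, smul_eq_mul, mul_one]
      rw [this]
      exact Submodule.smul_mem _ _ (Submodule.subset_span ⟨d, hdeg, rfl⟩)
    · rw [Submodule.span_le]
      rintro _ ⟨d, hd, rfl⟩
      rw [SetLike.mem_coe, mem_homogeneousSubmodule]
      exact isHomogeneous_monomial _ (by rw [← monDeg_eq_degree]; exact hd)
  rw [heq]
  exact Submodule.fg_span (hfin.image _)

lemma part1 {k : Type*} [Field k] {n : ℕ} (I : Ideal (MvPolynomial (Fin n) k))
    (hmon : IsMonomialIdeal I) (hborel : IsBorelFixed I)
    (s t : ℕ) (h : hilb I t < (s + t).choose t) :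
    ∀ A : Fin n →₀ ℕ, monDeg A = t → (∀ i ∈ A.support, (i : ℕ) < n - s) →
      monomial A (1 : k) ∈ I := by
  classical
  intro A hdeg hsupp
  by_contra hA
  obtain ⟨CF, hinj, hprop⟩ := construction (s := s) A hdeg hsupp
  have hnotin : ∀ M, monomial (CF M) (1:k) ∉ I := by
    intro M hmem
    obtain ⟨-, f, hf, hmap⟩ := hprop M
    exact hA (hmap ▸ descent hmon hborel hf hmem)
  -- the quotient vectors
  set Msub := (homogeneousSubmodule (Fin n) k t).map (Ideal.Quotient.mkₐ k I).toLinearMap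
    with hMsub
  have hmemsub : ∀ M : Sym (Fin (s+1)) t,
      (Ideal.Quotient.mkₐ k I) (monomial (CF M) (1:k)) ∈ Msub := by
    intro M
    exact Submodule.mem_map_of_mem (by
      rw [mem_homogeneousSubmodule]
      exact isHomogeneous_monomial _ (by rw [← monDeg_eq_degree]; exact (hprop M).1))
  set v : Sym (Fin (s+1)) t → ↥Msub :=
    fun M => ⟨(Ideal.Quotient.mkₐ k I) (monomial (CF M) (1:k)), hmemsub M⟩ with hv
  have hli : LinearIndependent k v := by
    apply LinearIndependent.of_comp Msub.subtype
    rw [Fintype.linearIndependent_iff]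
    intro g hg M0
    set p := ∑ M : Sym (Fin (s+1)) t, g M • monomial (CF M) (1:k) with hp
    have hpI : p ∈ I := by
      rw [← Ideal.Quotient.eq_zero_iff_mem, ← Ideal.Quotient.mkₐ_eq_mk k I]
      have : (Ideal.Quotient.mkₐ k I) p
          = ∑ M : Sym (Fin (s+1)) t, g M • (Ideal.Quotient.mkₐ k I) (monomial (CF M) (1:k)) := by
        rw [hp, map_sum]
        exact Finset.sum_congr rfl (fun M _ => map_smul _ _ _)
      rw [this]
      exact hg
    have hco : coeff (CF M0) p = g M0 := by
      rw [hp, MvPolynomial.coeff_sum]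
      rw [Finset.sum_eq_single M0]
      · rw [MvPolynomial.coeff_smul, coeff_monomial, if_pos rfl, smul_eq_mul, mul_one]
      · intro M _ hne
        rw [MvPolynomial.coeff_smul, coeff_monomial, if_neg (fun hc => hne (hinj hc)),
          smul_eq_mul, mul_zero]
      · intro habs
        exact absurd (Finset.mem_univ M0) habs
    by_contra hg0
    exact hnotin M0 (mem_of_coeff hmon hpI (by rw [hco]; exact hg0))
  have hfin : Module.Finite k ↥Msub :=
    Module.Finite.iff_fg.mpr (Submodule.FG.map _ (homSub_fg k n t))
  have hcard := hli.fintype_card_le_finrank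
  rw [Sym.card_sym_eq_multichoose, Nat.multichoose_eq, Fintype.card_fin] at hcard
  have : (s + 1 + t - 1).choose t = (s + t).choose t := by congr 1; omega
  rw [this] at hcard
  exact absurd (lt_of_lt_of_le h hcard) (lt_irrefl _)

lemma trunc {n : ℕ} : ∀ (m : ℕ) (D : Fin n →₀ ℕ) (t : ℕ), monDeg D = t + m →
    ∃ E, E ≤ D ∧ monDeg E = t := by
  intro m
  induction m with
  | zero => exact fun D t h => ⟨D, le_refl D, by omega⟩
  | succ m ih =>
      intro D t h
      have hD0 : D ≠ 0 := by
        rintro rfl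
        simp [monDeg] at h
      obtain ⟨i, hi⟩ := Finsupp.ne_iff.mp hD0
      have hi' : D i ≠ 0 := by simpa using hi
      have hle : Finsupp.single i 1 ≤ D :=
        Finsupp.single_le_iff.mpr (Nat.one_le_iff_ne_zero.mpr hi')
      have hdec : monDeg (D - Finsupp.single i 1) = t + m := by
        have h2 := monDeg_add (D - Finsupp.single i 1) (Finsupp.single i 1)
        rw [tsub_add_cancel_of_le hle, monDeg_single] at h2
        omega
      obtain ⟨E, hE1, hE2⟩ := ih (D - Finsupp.single i 1) t hdec
      exact ⟨E, le_trans hE1 tsub_le_self, hE2⟩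

lemma step2 {k : Type*} [Field k] {n : ℕ} (I : Ideal (MvPolynomial (Fin n) k)) (s t : ℕ)
    (Hlow : ∀ A : Fin n →₀ ℕ, monDeg A = t → (∀ i ∈ A.support, (i : ℕ) < n - s) →
      monomial A (1 : k) ∈ I) :
    ∀ t' ≥ t, ∀ p : MvPolynomial (Fin n) k, p.IsHomogeneous t' → p ∈ lastVars k n s ⊔ I := by
  classical
  intro t' ht' p hp
  rw [← support_sum_monomial_coeff p]
  apply Ideal.sum_mem
  intro D hD
  have hdeg : monDeg D = t' := by
    by_contra hne
    exact (mem_support_iff.mp hD)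
      (hp.coeff_eq_zero (by rw [← monDeg_eq_degree]; exact hne))
  by_cases hhigh : ∃ i ∈ D.support, n - s ≤ (i : ℕ)
  · obtain ⟨i, hi, hns⟩ := hhigh
    have hXi : (X i : MvPolynomial (Fin n) k) ∈ lastVars k n s :=
      Ideal.subset_span ⟨i, hns, rfl⟩
    have hXmon : (X i : MvPolynomial (Fin n) k) = monomial (Finsupp.single i 1) 1 := by
      rw [← X_pow_eq_monomial, pow_one]
    have hle : Finsupp.single i 1 ≤ D :=
      Finsupp.single_le_iff.mpr (Nat.one_le_iff_ne_zero.mpr (Finsupp.mem_support_iff.mp hi))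
    have heq : monomial D (coeff D p)
        = monomial (D - Finsupp.single i 1) (coeff D p) * X i := by
      rw [hXmon, monomial_mul, mul_one, tsub_add_cancel_of_le hle]
    rw [heq]
    exact Ideal.mem_sup_left (Ideal.mul_mem_left _ _ hXi)
  · push_neg at hhigh
    obtain ⟨m, hm⟩ : ∃ m, monDeg D = t + m := ⟨t' - t, by omega⟩
    obtain ⟨E, hEle, hEdeg⟩ := trunc m D t hm
    have hElow : ∀ i ∈ E.support, (i : ℕ) < n - s := by
      intro i hi
      apply hhigh
      rw [Finsupp.mem_support_iff] at hi ⊢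
      have := hEle i
      omega
    have hE : monomial E (1:k) ∈ I := Hlow E hEdeg hElow
    have heq : monomial D (coeff D p) = monomial (D - E) (coeff D p) * monomial E 1 := by
      rw [monomial_mul, mul_one, tsub_add_cancel_of_le hEle]
    rw [heq]
    exact Ideal.mem_sup_right (Ideal.mul_mem_left _ _ hE)

end StmtFourHelpers

/-- If `I` is Borel-fixed and `dim_k(R/I)_t < C(s+t,t)`, then every
monomial of degree `t` in `x_1,…,x_{n-s}` lies in `I`; consequently the last `s`
variables generate a reduction of `R/I` with reduction number at most `t-1`. -/
theorem stmt4 {k : Type*} [Field k] {n : ℕ} (I : Ideal (MvPolynomial (Fin n) k))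
    (hmon : IsMonomialIdeal I) (hborel : IsBorelFixed I)
    (s t : ℕ) (hs : 1 ≤ s) (ht : 1 ≤ t)
    (h : hilb I t < (s + t).choose t) :
    (∀ A : Fin n →₀ ℕ, monDeg A = t → (∀ i ∈ A.support, (i : ℕ) < n - s) →
        monomial A (1 : k) ∈ I) ∧
    IsReductionOf (lastVars k n s) I ∧
    redNum (lastVars k n s) I ≤ t - 1 := by
  have Hlow : ∀ A : Fin n →₀ ℕ, monDeg A = t → (∀ i ∈ A.support, (i : ℕ) < n - s) →
      monomial A (1 : k) ∈ I := part1 I hmon hborel s t h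
  refine ⟨Hlow, ⟨t, step2 I s t Hlow⟩, ?_⟩
  apply Nat.sInf_le
  intro t' ht' p hp
  exact step2 I s t Hlow t' (by omega) p hp
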